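/- Let G be a finite simple connected graph. Then the conical hull (the set of all finite nonnegative linear combinations) of CUT(G) equals the conical hull of BOND(G); in particular, the indicator vector of every cut of G is a nonnegative linear combination of indicator vectors of bonds of G. -/

import Mathlib

open Finset

namespace BondPolytope

variable {V : Type*}

/-- The cut `δ(S)`: edges of `G` with exactly one endpoint in `S`. -/
def cut (G : SimpleGraph V) (S : Set V) : Set (Sym2 V) :=
  {e | e ∈ G.edgeSet ∧ ∃ u w, e = s(u, w) ∧ u ∈ S ∧ w ∉ S}

/-- A set of edges is a cut of `G`. -/
def IsCut (G : SimpleGraph V) (D : Set (Sym2 V)) : Prop :=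
  ∃ S : Set V, D = cut G S

/-- A set of edges is a bond of `G`: it is a cut `δ(S)` such that both sides induce
connected (possibly empty) subgraphs. -/
def IsBond (G : SimpleGraph V) (D : Set (Sym2 V)) : Prop :=
  ∃ S : Set V, D = cut G S ∧ (G.induce S).Preconnected ∧ (G.induce Sᶜ).Preconnected

open Classical in
/-- The indicator vector `x^δ ∈ ℝ^E` of a set `δ` of edges. -/
noncomputable def indVec (G : SimpleGraph V) (D : Set (Sym2 V)) : ↥G.edgeSet → ℝ :=
  fun e => if (e : Sym2 V) ∈ D then 1 else 0

/-- The bond polytope `BOND(G) ⊆ ℝ^E`. -/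
noncomputable def bondPolytope (G : SimpleGraph V) : Set (↥G.edgeSet → ℝ) :=
  convexHull ℝ {x | ∃ D, IsBond G D ∧ x = indVec G D}

/-- The cut polytope `CUT(G) ⊆ ℝ^E`. -/
noncomputable def cutPolytope (G : SimpleGraph V) : Set (↥G.edgeSet → ℝ) :=
  convexHull ℝ {x | ∃ D, IsCut G D ∧ x = indVec G D}

/-- `a^T x`. -/
noncomputable def dot {ι : Type*} [Fintype ι] (a x : ι → ℝ) : ℝ := ∑ i, a i * x i

/-- Affine dimension of a set of points. -/
noncomputable def affDim {W : Type*} [AddCommGroup W] [Module ℝ W] (s : Set W) : ℕ :=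
  Module.finrank ℝ ↥(vectorSpan ℝ s)

/-- `a^T x ≤ b` is facet-defining for `P`. -/
def IsFacet {ι : Type*} [Fintype ι] (P : Set (ι → ℝ)) (a : ι → ℝ) (b : ℝ) : Prop :=
  a ≠ 0 ∧ (∀ x ∈ P, dot a x ≤ b) ∧ {x ∈ P | dot a x = b}.Nonempty ∧
    affDim {x ∈ P | dot a x = b} + 1 = affDim P


/-- The conical hull: all finite nonnegative linear combinations of elements of `s`. -/
def conicalHull {W : Type*} [AddCommGroup W] [Module ℝ W] (s : Set W) : Set W :=
  {x | ∃ (t : Finset W) (c : W → ℝ), (∀ y ∈ t, 0 ≤ c y ∧ y ∈ s) ∧ x = ∑ y ∈ t, c y • y}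


section Reach

variable {G : SimpleGraph V}



/-- Reachability within a vertex set `T`. -/
def ReachIn (G : SimpleGraph V) (T : Set V) (u v : V) : Prop :=
  u ∈ T ∧ v ∈ T ∧ ∃ p : G.Walk u v, ∀ x ∈ p.support, x ∈ T

lemma reachIn_refl {T : Set V} {u : V} (hu : u ∈ T) : ReachIn G T u u :=
  ⟨hu, hu, SimpleGraph.Walk.nil, by simp [hu]⟩

lemma reachIn_symm {T : Set V} {u v : V} (h : ReachIn G T u v) : ReachIn G T v u := by
  obtain ⟨hu, hv, p, hp⟩ := h
  exact ⟨hv, hu, p.reverse, by simpa using hp⟩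

lemma reachIn_trans {T : Set V} {u v w : V} (h : ReachIn G T u v) (h' : ReachIn G T v w) :
    ReachIn G T u w := by
  obtain ⟨hu, hv, p, hp⟩ := h
  obtain ⟨_, hw, q, hq⟩ := h'
  refine ⟨hu, hw, p.append q, fun x hx => ?_⟩
  rw [SimpleGraph.Walk.mem_support_append_iff] at hx
  exact hx.elim (hp x) (hq x)

lemma reachIn_mono {T T' : Set V} (hTT : T ⊆ T') {u v : V} (h : ReachIn G T u v) :
    ReachIn G T' u v := by
  obtain ⟨hu, hv, p, hp⟩ := h
  exact ⟨hTT hu, hTT hv, p, fun x hx => hTT (hp x hx)⟩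

lemma reachIn_adj {T : Set V} {u v w : V} (h : ReachIn G T u v) (hvw : G.Adj v w)
    (hw : w ∈ T) : ReachIn G T u w :=
  reachIn_trans h ⟨h.2.1, hw, hvw.toWalk, by
    rintro x hx
    simp [SimpleGraph.Walk.support_cons] at hx
    rcases hx with rfl | rfl
    exacts [h.2.1, hw]⟩

/-- The connected component of `u` inside `T`. -/
def comp (G : SimpleGraph V) (T : Set V) (u : V) : Set V := {v | ReachIn G T u v}

lemma mem_comp_self {T : Set V} {u : V} (hu : u ∈ T) : u ∈ comp G T u := reachIn_refl hu

lemma comp_subset {T : Set V} {u : V} : comp G T u ⊆ T := fun _ h => h.2.1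

lemma comp_eq_of_mem {T : Set V} {u v : V} (h : v ∈ comp G T u) :
    comp G T v = comp G T u := by
  ext x
  exact ⟨fun hx => reachIn_trans h hx, fun hx => reachIn_trans (reachIn_symm h) hx⟩

lemma comp_adj_closure {T : Set V} {u v w : V} (hv : v ∈ comp G T u) (hvw : G.Adj v w)
    (hw : w ∈ T) : w ∈ comp G T u := reachIn_adj hv hvw hw

lemma walk_support_mem_comp {T : Set V} {u : V} :
    ∀ {a b : V} (p : G.Walk a b), a ∈ comp G T u → (∀ x ∈ p.support, x ∈ T) →
      ∀ x ∈ p.support, x ∈ comp G T u := by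
  intro a b p
  induction p with
  | nil =>
    intro ha _ x hx
    simp at hx; subst hx; exact ha
  | cons h q ih =>
    intro ha hT x hx
    rw [SimpleGraph.Walk.support_cons] at hx hT
    have hbT : ∀ x ∈ q.support, x ∈ T := fun x hx => hT x (List.mem_cons_of_mem _ hx)
    have hbc : _ ∈ comp G T u :=
      comp_adj_closure ha h (hbT _ q.start_mem_support)
    rcases List.mem_cons.mp hx with rfl | hx
    · exact ha
    · exact ih hbc hbT x hx

lemma reachIn_comp {T : Set V} {u v : V} (hv : v ∈ comp G T u) :
    ReachIn G (comp G T u) u v := by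
  obtain ⟨hu, hvT, p, hp⟩ := hv
  exact ⟨mem_comp_self hu, ⟨hu, hvT, p, hp⟩,
    p, walk_support_mem_comp p (mem_comp_self hu) hp⟩

lemma reachable_induce_of_reachIn {U : Set V} :
    ∀ {x y : V} (p : G.Walk x y) (hx : x ∈ U) (hy : y ∈ U), (∀ z ∈ p.support, z ∈ U) →
      (G.induce U).Reachable ⟨x, hx⟩ ⟨y, hy⟩ := by
  intro x y p
  induction p with
  | nil => intro hx hy _; rfl
  | @cons a b c h q ih =>
    intro hx hy hp
    rw [SimpleGraph.Walk.support_cons] at hp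
    have hq : ∀ z ∈ q.support, z ∈ U := fun z hz => hp z (List.mem_cons_of_mem _ hz)
    have hb : b ∈ U := hq b q.start_mem_support
    have hadj : (G.induce U).Adj ⟨a, hx⟩ ⟨b, hb⟩ := by
      simpa [SimpleGraph.comap_adj] using h
    exact (hadj.reachable).trans (ih hb hy hq)

lemma reachIn_induce_reachable {U : Set V} {x y : V} (h : ReachIn G U x y) :
    (G.induce U).Reachable ⟨x, h.1⟩ ⟨y, h.2.1⟩ := by
  obtain ⟨hx, hy, p, hp⟩ := h
  exact reachable_induce_of_reachIn p hx hy hp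

lemma comp_preconnected (G : SimpleGraph V) (T : Set V) (u : V) :
    (G.induce (comp G T u)).Preconnected := by
  rintro ⟨x, hx⟩ ⟨y, hy⟩
  have h1 := reachIn_induce_reachable (G := G) (reachIn_comp hx)
  have h2 := reachIn_induce_reachable (G := G) (reachIn_comp hy)
  exact (h1.symm.trans h2)

/-- The bond side associated to a crossing edge `(a, b)`. -/
def bside (G : SimpleGraph V) (S : Set V) (a b : V) : Set V :=
  comp G (comp G S a)ᶜ b

section Struct

variable {S : Set V} {a b : V}

/-- Structure of edges leaving `bside`: they go from `Sᶜ` into `comp G S a`. -/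
lemma bside_edge_struct (ha : a ∈ S) {u w : V} (hu : u ∈ bside G S a b)
    (hw : w ∉ bside G S a b) (huw : G.Adj u w) : w ∈ comp G S a ∧ u ∉ S := by
  have hwC : w ∈ comp G S a := by
    by_contra hwC
    exact hw (comp_adj_closure hu huw hwC)
  refine ⟨hwC, fun huS => ?_⟩
  have : u ∈ comp G S a := comp_adj_closure hwC (huw.symm) huS
  exact (comp_subset (T := (comp G S a)ᶜ) hu) this

lemma cut_bside_subset (ha : a ∈ S) : cut G (bside G S a b) ⊆ cut G S := by
  rintro e ⟨he, u, w, rfl, hu, hw⟩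
  have hadj : G.Adj u w := he
  obtain ⟨hwC, huS⟩ := bside_edge_struct ha hu hw hadj
  exact ⟨he, w, u, Sym2.eq_swap, comp_subset hwC, huS⟩

lemma mem_cut_bside (hab : G.Adj a b) (ha : a ∈ S) (hb : b ∉ S) :
    s(a, b) ∈ cut G (bside G S a b) := by
  refine ⟨hab, b, a, Sym2.eq_swap, ?_, ?_⟩
  · exact mem_comp_self (fun hbC => hb (comp_subset hbC))
  · intro haD
    exact (comp_subset (T := (comp G S a)ᶜ) haD) (mem_comp_self ha)

/-- Uniqueness: if the crossing edge `s(a,b)` lies in the bond cut of `(a',b')`,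
then the two bond sides agree. -/
lemma bside_unique {a' b' : V} (ha' : a' ∈ S) (ha : a ∈ S) (hb : b ∉ S)
    (h : s(a, b) ∈ cut G (bside G S a' b')) : bside G S a b = bside G S a' b' := by
  obtain ⟨he, u, w, hsym, hu, hw⟩ := h
  have hadj : G.Adj u w := by rw [hsym] at he; exact he
  obtain ⟨hwC, huS⟩ := bside_edge_struct ha' hu hw hadj
  rw [Sym2.eq_iff] at hsym
  have hcase : a = w ∧ b = u := by
    rcases hsym with ⟨rfl, rfl⟩ | ⟨h1, h2⟩
    · exact absurd ha huS
    · exact ⟨h1, h2⟩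
  obtain ⟨rfl, rfl⟩ := hcase
  -- now a = w ∈ comp G S a', b = u ∈ bside G S a' b'
  have hC : comp G S a = comp G S a' := comp_eq_of_mem hwC
  unfold bside
  rw [hC]
  exact comp_eq_of_mem hu

/-- Auxiliary: walking towards `a ∈ C` from outside `C ∪ D`, we can reach `C`
while avoiding `D`. -/
lemma exists_reach_to_comp (ha : a ∈ S) :
    ∀ {x c' : V} (_ : G.Walk x c'), c' ∈ comp G S a → x ∉ comp G S a →
      x ∉ bside G S a b →
      ∃ c ∈ comp G S a, ReachIn G (bside G S a b)ᶜ x c := by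
  intro x c' p
  induction p with
  | nil => intro hc hx _; exact absurd hc hx
  | @cons u y c h q ih =>
    intro hc hx hxD
    by_cases hyC : y ∈ comp G S a
    · refine ⟨y, hyC, reachIn_adj (reachIn_refl hxD) h ?_⟩
      intro hyD
      exact (comp_subset (T := (comp G S a)ᶜ) hyD) hyC
    · have hyD : y ∉ bside G S a b := by
        intro hyD
        exact hxD (comp_adj_closure hyD h.symm hx)
      obtain ⟨cv, hcv, hr⟩ := ih hc hyC hyD
      exact ⟨cv, hcv, reachIn_trans (reachIn_adj (reachIn_refl hxD) h hyD) hr⟩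

lemma bond_cut_bside (hG : G.Connected) (hab : G.Adj a b) (ha : a ∈ S) (hb : b ∉ S) :
    IsBond G (cut G (bside G S a b)) := by
  refine ⟨bside G S a b, rfl, comp_preconnected G _ _, ?_⟩
  have hCsub : comp G S a ⊆ (bside G S a b)ᶜ := fun x hx hxD =>
    (comp_subset (T := (comp G S a)ᶜ) hxD) hx
  have haD : a ∈ (bside G S a b)ᶜ := hCsub (mem_comp_self ha)
  have key : ∀ x ∈ (bside G S a b)ᶜ, ReachIn G (bside G S a b)ᶜ x a := by
    intro x hx
    by_cases hxC : x ∈ comp G S a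
    · exact reachIn_mono hCsub (reachIn_symm (reachIn_comp hxC))
    · obtain ⟨p⟩ := hG.preconnected x a
      obtain ⟨cv, hcv, hr⟩ := exists_reach_to_comp (b := b) ha p (mem_comp_self ha) hxC hx
      exact reachIn_trans hr (reachIn_mono hCsub (reachIn_trans
        (reachIn_symm (reachIn_comp hcv)) (reachIn_comp (mem_comp_self ha))))
  rintro ⟨x, hx⟩ ⟨y, hy⟩
  have h1 := reachIn_induce_reachable (G := G) (key x hx)
  have h2 := reachIn_induce_reachable (G := G) (key y hy)
  exact h1.trans h2.symm

end Struct

end Reach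

section Cone

variable {W : Type*} [AddCommGroup W] [Module ℝ W] {s : Set W}


lemma zero_mem_conicalHull : (0 : W) ∈ conicalHull s :=
  ⟨∅, 0, by simp, by simp⟩

lemma subset_conicalHull : s ⊆ conicalHull s := by
  intro y hy
  exact ⟨{y}, fun _ => 1, by simp [hy], by simp⟩

lemma conicalHull_mono {s t : Set W} (h : s ⊆ t) : conicalHull s ⊆ conicalHull t := by
  rintro x ⟨u, c, hc, rfl⟩
  exact ⟨u, c, fun y hy => ⟨(hc y hy).1, h (hc y hy).2⟩, rfl⟩

lemma add_mem_conicalHull {x x' : W} (hx : x ∈ conicalHull s) (hx' : x' ∈ conicalHull s) :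
    x + x' ∈ conicalHull s := by
  classical
  obtain ⟨t1, c1, hc1, rfl⟩ := hx
  obtain ⟨t2, c2, hc2, rfl⟩ := hx'
  refine ⟨t1 ∪ t2, fun y => (if y ∈ t1 then c1 y else 0) + (if y ∈ t2 then c2 y else 0),
    ?_, ?_⟩
  · intro y hy
    constructor
    · have h1 : 0 ≤ if y ∈ t1 then c1 y else 0 := by
        split_ifs with h; exacts [(hc1 y h).1, le_refl 0]
      have h2 : 0 ≤ if y ∈ t2 then c2 y else 0 := by
        split_ifs with h; exacts [(hc2 y h).1, le_refl 0]
      exact add_nonneg h1 h2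
    · rcases Finset.mem_union.mp hy with h | h
      exacts [(hc1 y h).2, (hc2 y h).2]
  · have e1 : ∑ y ∈ t1, c1 y • y = ∑ y ∈ t1 ∪ t2, (if y ∈ t1 then c1 y else 0) • y :=
      (Finset.sum_congr rfl fun y hy => by rw [if_pos hy]).trans
        (Finset.sum_subset Finset.subset_union_left
          (fun y _ hy => by rw [if_neg hy, zero_smul]))
    have e2 : ∑ y ∈ t2, c2 y • y = ∑ y ∈ t1 ∪ t2, (if y ∈ t2 then c2 y else 0) • y :=
      (Finset.sum_congr rfl fun y hy => by rw [if_pos hy]).trans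
        (Finset.sum_subset Finset.subset_union_right
          (fun y _ hy => by rw [if_neg hy, zero_smul]))
    rw [e1, e2, ← Finset.sum_add_distrib]
    exact Finset.sum_congr rfl fun y _ => by rw [add_smul]

lemma smul_mem_conicalHull {x : W} {r : ℝ} (hr : 0 ≤ r) (hx : x ∈ conicalHull s) :
    r • x ∈ conicalHull s := by
  obtain ⟨t, c, hc, rfl⟩ := hx
  refine ⟨t, fun y => r * c y, fun y hy => ⟨mul_nonneg hr (hc y hy).1, (hc y hy).2⟩, ?_⟩
  rw [Finset.smul_sum]
  exact Finset.sum_congr rfl fun y _ => by rw [smul_smul]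

lemma sum_mem_conicalHull {ι : Type*} (t : Finset ι) (g : ι → W)
    (h : ∀ i ∈ t, g i ∈ conicalHull s) : ∑ i ∈ t, g i ∈ conicalHull s := by
  classical
  induction t using Finset.induction_on with
  | empty => simpa using zero_mem_conicalHull
  | insert _ _ hni ih =>
    rw [Finset.sum_insert hni]
    exact add_mem_conicalHull (h _ (Finset.mem_insert_self _ _))
      (ih fun i hi => h i (Finset.mem_insert_of_mem hi))

lemma convex_conicalHull : Convex ℝ (conicalHull s) := by
  intro x hx y hy p q hp hq _
  exact add_mem_conicalHull (smul_mem_conicalHull hp hx) (smul_mem_conicalHull hq hy)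

lemma conicalHull_subset_of_subset {s t : Set W} (h : s ⊆ conicalHull t) :
    conicalHull s ⊆ conicalHull t := by
  rintro x ⟨u, c, hc, rfl⟩
  exact sum_mem_conicalHull u _ fun y hy =>
    smul_mem_conicalHull (hc y hy).1 (h (hc y hy).2)


end Cone

lemma cut_mem_conicalHull_bonds [Fintype V] (G : SimpleGraph V)
    (hG : G.Connected) (S : Set V) :
    indVec G (cut G S) ∈
      conicalHull {x : ↥G.edgeSet → ℝ | ∃ D, IsBond G D ∧ x = indVec G D} := by
  classical
  set P := (Set.toFinite {p : V × V | G.Adj p.1 p.2 ∧ p.1 ∈ S ∧ p.2 ∉ S}).toFinset with hP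
  set f : V × V → (↥G.edgeSet → ℝ) := fun p => indVec G (cut G (bside G S p.1 p.2)) with hf
  refine ⟨P.image f, fun _ => 1, ?_, ?_⟩
  · intro y hy
    refine ⟨zero_le_one, ?_⟩
    obtain ⟨p, hp, rfl⟩ := Finset.mem_image.mp hy
    rw [hP, Set.Finite.mem_toFinset] at hp
    exact ⟨_, bond_cut_bside hG hp.1 hp.2.1 hp.2.2, rfl⟩
  · funext ε
    rw [Finset.sum_apply]
    simp only [one_smul]
    by_cases hε : (ε : Sym2 V) ∈ cut G S
    · obtain ⟨he, aa, bb, hsym, haS, hbS⟩ := hε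
      have hε' : (ε : Sym2 V) ∈ cut G S := ⟨he, aa, bb, hsym, haS, hbS⟩
      have hadj : G.Adj aa bb := by
        rw [hsym, SimpleGraph.mem_edgeSet] at he; exact he
      have hPmem : (aa, bb) ∈ P := by
        rw [hP, Set.Finite.mem_toFinset]; exact ⟨hadj, haS, hbS⟩
      rw [Finset.sum_eq_single_of_mem (f (aa, bb)) (Finset.mem_image_of_mem f hPmem) ?_]
      · show indVec G (cut G S) ε = indVec G (cut G (bside G S aa bb)) ε
        simp only [indVec]
        rw [if_pos hε', if_pos (by rw [hsym]; exact mem_cut_bside hadj haS hbS)]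
      · intro y hy hne
        obtain ⟨⟨a', b'⟩, hp', rfl⟩ := Finset.mem_image.mp hy
        rw [hP, Set.Finite.mem_toFinset] at hp'
        show indVec G (cut G (bside G S a' b')) ε = 0
        simp only [indVec]
        rw [if_neg]
        intro hmem
        apply hne
        rw [hsym] at hmem
        have hB : bside G S aa bb = bside G S a' b' :=
          bside_unique hp'.2.1 haS hbS hmem
        show f (a', b') = f (aa, bb)
        simp only [hf, hB]
    · simp only [indVec]
      rw [if_neg hε, Finset.sum_eq_zero]
      intro y hy
      obtain ⟨⟨a', b'⟩, hp', rfl⟩ := Finset.mem_image.mp hy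
      rw [hP, Set.Finite.mem_toFinset] at hp'
      show indVec G (cut G (bside G S a' b')) ε = 0
      simp only [indVec]
      rw [if_neg]
      exact fun hmem => hε (cut_bside_subset hp'.2.1 hmem)

theorem cone_cutPolytope_eq_cone_bondPolytope {V : Type*} [Fintype V] [DecidableEq V]
    (G : SimpleGraph V) [DecidableRel G.Adj] (hG : G.Connected) :
    conicalHull (cutPolytope G) = conicalHull (bondPolytope G) ∧
      ∀ S : Set V, indVec G (cut G S) ∈
        conicalHull {x : ↥G.edgeSet → ℝ | ∃ D, IsBond G D ∧ x = indVec G D} := by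
  have part2 := cut_mem_conicalHull_bonds G hG
  refine ⟨?_, part2⟩
  have hbond_cut : bondPolytope G ⊆ cutPolytope G := by
    apply convexHull_mono
    rintro x ⟨D, ⟨S, hS, _, _⟩, rfl⟩
    exact ⟨D, ⟨S, hS⟩, rfl⟩
  apply le_antisymm
  · apply conicalHull_subset_of_subset
    have h1 : cutPolytope G ⊆
        conicalHull {x : ↥G.edgeSet → ℝ | ∃ D, IsBond G D ∧ x = indVec G D} := by
      apply convexHull_min ?_ convex_conicalHull
      rintro x ⟨D, ⟨S, rfl⟩, rfl⟩
      exact part2 S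
    exact h1.trans (conicalHull_mono (subset_convexHull ℝ _))
  · exact conicalHull_mono hbond_cut

end BondPolytope
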